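/- Let L be a finite meet-semidistributive lattice. Then the canonical meet complex of L is flag if and only if L is semidistributive (that is, L is also join-semidistributive). -/

import Mathlib

universe u v

def JoinSemidistrib (α : Type*) [Lattice α] : Prop :=
  ∀ x y z : α, x ⊔ y = x ⊔ z → x ⊔ (y ⊓ z) = x ⊔ y

def MeetSemidistrib (α : Type*) [Lattice α] : Prop :=
  ∀ x y z : α, x ⊓ y = x ⊓ z → x ⊓ (y ⊔ z) = x ⊓ y

section JoinDefs

variable {α : Type*} [Lattice α] [OrderBot α]

/-- `j` is join-irreducible: not the bottom element, and `j = a ⊔ b` implies `j = a` or `j = b`. -/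
def JoinIrred (j : α) : Prop :=
  j ≠ ⊥ ∧ ∀ a b : α, j = a ⊔ b → j = a ∨ j = b

/-- `A` join-refines `B`: every element of `A` is below some element of `B`. -/
def JoinRefines (A B : Finset α) : Prop :=
  ∀ a ∈ A, ∃ b ∈ B, a ≤ b

/-- `A` is an irredundant join representation of `w`. -/
def IrredJoinRep (A : Finset α) (w : α) : Prop :=
  A.sup id = w ∧ ∀ A' ⊂ A, A'.sup id < w

/-- `A` is the canonical join representation of `w`: the irredundant join representation
of `w` that join-refines every irredundant join representation of `w`. -/
def CanonicalJoinRep (A : Finset α) (w : α) : Prop :=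
  IrredJoinRep A w ∧ ∀ B : Finset α, IrredJoinRep B w → JoinRefines A B

/-- `A` joins canonically, i.e. `A` is a face of the canonical join complex. -/
def JoinsCanonically (A : Finset α) : Prop :=
  CanonicalJoinRep A (A.sup id)

/-- `j` is a canonical joinand of `w`. -/
def CanonicalJoinand (j w : α) : Prop :=
  ∃ A : Finset α, CanonicalJoinRep A w ∧ j ∈ A

end JoinDefs

/-- The canonical join complex is flag: any finite set of join-irreducible elements all of
whose two-element subsets are faces is itself a face. -/
def FlagCanonicalJoinComplex (α : Type*) [Lattice α] [OrderBot α] [DecidableEq α] : Prop :=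
  ∀ F : Finset α, (∀ j ∈ F, JoinIrred j) →
    (∀ j ∈ F, ∀ j' ∈ F, j ≠ j' → JoinsCanonically ({j, j'} : Finset α)) →
    JoinsCanonically F

/-- A lattice is crosscut-simplicial if for every `x ≤ y` and every proper subset `S` of the
set of atoms of the interval `[x, y]` (elements `a` with `x ⋖ a` and `a ≤ y`), the join of `x`
with all elements of `S` is strictly less than `y`. -/
def CrosscutSimplicial (β : Type*) [Lattice β] : Prop :=
  ∀ x y : β, x ≤ y → ∀ S : Finset β,
    (∀ a ∈ S, x ⋖ a ∧ a ≤ y) →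
    (∃ a : β, (x ⋖ a ∧ a ≤ y) ∧ a ∉ S) →
    S.fold (· ⊔ · : β → β → β) x id < y

section MeetDefs

variable {α : Type*} [Lattice α] [OrderTop α]

/-- `m` is meet-irreducible: not the top element, and `m = a ⊓ b` implies `m = a` or `m = b`. -/
def MeetIrred (m : α) : Prop :=
  m ≠ ⊤ ∧ ∀ a b : α, m = a ⊓ b → m = a ∨ m = b

/-- `A` meet-refines `B`: every element of `A` is above some element of `B`. -/
def MeetRefines (A B : Finset α) : Prop :=
  ∀ a ∈ A, ∃ b ∈ B, b ≤ a

/-- `A` is an irredundant meet representation of `w`. -/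
def IrredMeetRep (A : Finset α) (w : α) : Prop :=
  A.inf id = w ∧ ∀ A' ⊂ A, w < A'.inf id

/-- `A` is the canonical meet representation of `w`. -/
def CanonicalMeetRep (A : Finset α) (w : α) : Prop :=
  IrredMeetRep A w ∧ ∀ B : Finset α, IrredMeetRep B w → MeetRefines A B

/-- `A` meets canonically, i.e. `A` is a face of the canonical meet complex. -/
def MeetsCanonically (A : Finset α) : Prop :=
  CanonicalMeetRep A (A.inf id)

end MeetDefs

/-- The canonical meet complex is flag. -/
def FlagCanonicalMeetComplex (α : Type*) [Lattice α] [OrderTop α] [DecidableEq α] : Prop :=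
  ∀ F : Finset α, (∀ m ∈ F, MeetIrred m) →
    (∀ m ∈ F, ∀ m' ∈ F, m ≠ m' → MeetsCanonically ({m, m'} : Finset α)) →
    MeetsCanonically F


section Stmt16Aux

set_option linter.unusedSectionVars false
set_option linter.unusedVariables false

open Finset

open scoped Classical

variable {α : Type*} [Lattice α] [BoundedOrder α] [Fintype α] [DecidableEq α]

/-- A meet-irreducible element belongs to every finite set whose infimum it is. -/
lemma mem_of_inf_eq {m : α} (hm : MeetIrred m) :
    ∀ A : Finset α, A.inf id = m → m ∈ A := by
  intro A
  induction A using Finset.induction_on with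
  | empty => intro h; exact absurd h.symm hm.1
  | @insert a s hns ih =>
    intro h
    rw [Finset.inf_insert] at h
    rcases hm.2 a (s.inf id) h.symm with h1 | h2
    · exact Finset.mem_insert.2 (Or.inl h1)
    · exact Finset.mem_insert.2 (Or.inr (ih h2.symm))

/-- The meet of all elements strictly above `m`. -/
noncomputable def ustar (m : α) : α :=
  (Finset.univ.filter (fun x : α => m < x)).inf id

lemma ustar_le {m x : α} (h : m < x) : ustar m ≤ x :=
  Finset.inf_le (Finset.mem_filter.2 ⟨Finset.mem_univ x, h⟩)

lemma le_ustar {m : α} : m ≤ ustar m :=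
  Finset.le_inf fun x hx => le_of_lt (Finset.mem_filter.1 hx).2

lemma lt_ustar {m : α} (hm : MeetIrred m) : m < ustar m := by
  refine lt_of_le_of_ne le_ustar fun h => ?_
  have := mem_of_inf_eq hm _ h.symm
  exact lt_irrefl m (Finset.mem_filter.1 this).2

lemma ustar_le_sup {m x : α} (hx : ¬ x ≤ m) : ustar m ≤ x ⊔ m :=
  ustar_le (lt_of_le_of_ne le_sup_right fun h => hx (le_sup_left.trans h.ge))

/-- `u` covers `w`. -/
def IsCov (w u : α) : Prop := w < u ∧ ∀ t, w < t → t ≤ u → t = u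

lemma exists_cov_le {w y : α} (h : w < y) : ∃ u, IsCov w u ∧ u ≤ y := by
  obtain ⟨u, hu, hmin⟩ := (Finset.univ.filter (fun z : α => w < z ∧ z ≤ y)).exists_minimal
    ⟨y, Finset.mem_filter.2 ⟨Finset.mem_univ y, h, le_rfl⟩⟩
  rw [Finset.mem_filter] at hu
  refine ⟨u, ⟨hu.2.1, fun t ht htu => ?_⟩, hu.2.2⟩
  by_contra hne
  exact lt_irrefl _ (lt_of_lt_of_le (lt_of_le_of_ne htu hne) (hmin (y := t) (Finset.mem_filter.2 ⟨Finset.mem_univ t, ht, htu.trans hu.2.2⟩)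
    (lt_of_le_of_ne htu hne).le))

lemma cov_inf_cov {w u₁ u₂ : α} (h1 : IsCov w u₁) (h2 : IsCov w u₂) (hne : u₁ ≠ u₂) :
    u₁ ⊓ u₂ = w := by
  rcases eq_or_lt_of_le (le_inf h1.1.le h2.1.le : w ≤ u₁ ⊓ u₂) with h | h
  · exact h.symm
  · exact absurd ((h1.2 _ h inf_le_left).symm.trans (h2.2 _ h inf_le_right)) hne

/-- The greatest element `x` with `x ⊓ u = w` (meet-semidistributivity makes this work). -/
noncomputable def mu (w u : α) : α :=
  ((Finset.univ.filter (fun x : α => x ⊓ u = w)).sup id) ⊔ w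

lemma le_mu {w u x : α} (h : x ⊓ u = w) : x ≤ mu w u := by
  have hx : x ∈ Finset.univ.filter (fun y : α => y ⊓ u = w) :=
    Finset.mem_filter.2 ⟨Finset.mem_univ x, h⟩
  exact le_trans (Finset.le_sup (f := id) hx) le_sup_left

lemma w_le_mu {w u : α} : w ≤ mu w u := le_sup_right

lemma mu_inf (hmsd : MeetSemidistrib α) {w u : α} (hwu : w ≤ u) : mu w u ⊓ u = w := by
  have key : ∀ s : Finset α, (∀ x ∈ s, x ⊓ u = w) → (s.sup id ⊔ w) ⊓ u = w := by
    intro s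
    induction s using Finset.induction_on with
    | empty =>
      intro _
      simp only [Finset.sup_empty, bot_sup_eq]
      exact inf_eq_left.2 hwu
    | @insert a s hns ih =>
      intro hall
      have ha : a ⊓ u = w := hall a (Finset.mem_insert_self a s)
      have hs : (s.sup id ⊔ w) ⊓ u = w := ih fun x hx => hall x (Finset.mem_insert_of_mem hx)
      have hpre : u ⊓ a = u ⊓ (s.sup id ⊔ w) := by
        rw [inf_comm u a, ha, inf_comm u _, hs]
      have h2 := hmsd u a (s.sup id ⊔ w) hpre
      calc ((insert a s).sup id ⊔ w) ⊓ u = u ⊓ (a ⊔ (s.sup id ⊔ w)) := by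
            rw [Finset.sup_insert, show (id a : α) = a from rfl, sup_assoc, inf_comm]
        _ = u ⊓ a := h2
        _ = w := by rw [inf_comm u a, ha]
  exact key _ fun x hx => (Finset.mem_filter.1 hx).2

lemma le_of_mu_lt (hmsd : MeetSemidistrib α) {w u x : α} (hcov : IsCov w u)
    (h : mu w u < x) : u ≤ x := by
  have hwxu : w ≤ x ⊓ u := le_inf (w_le_mu.trans h.le) hcov.1.le
  rcases eq_or_lt_of_le hwxu with he | hlt
  · exact absurd (le_mu he.symm) h.not_ge
  · have := hcov.2 _ hlt inf_le_right
    rw [← this]; exact inf_le_left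

lemma mu_meetIrred (hmsd : MeetSemidistrib α) {w u : α} (hcov : IsCov w u) :
    MeetIrred (mu w u) := by
  have hinf := mu_inf hmsd hcov.1.le
  constructor
  · intro h
    rw [h, top_inf_eq] at hinf
    exact hcov.1.ne' hinf
  · intro a b hab
    by_contra hcon
    push_neg at hcon
    have hua : u ≤ a := le_of_mu_lt hmsd hcov
      (lt_of_le_of_ne (le_of_eq_of_le hab inf_le_left) hcon.1)
    have hub : u ≤ b := le_of_mu_lt hmsd hcov
      (lt_of_le_of_ne (le_of_eq_of_le hab inf_le_right) hcon.2)
    have : u ≤ mu w u := by rw [hab]; exact le_inf hua hub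
    rw [inf_eq_right.2 this] at hinf
    exact hcov.1.ne' hinf

lemma u_le_ustar_mu (hmsd : MeetSemidistrib α) {w u : α} (hcov : IsCov w u) :
    u ≤ ustar (mu w u) :=
  Finset.le_inf fun x hx => le_of_mu_lt hmsd hcov (Finset.mem_filter.1 hx).2

/-- The canonical meet representation of `w`. -/
noncomputable def canonSet (w : α) : Finset α :=
  (Finset.univ.filter (fun u : α => IsCov w u)).image (fun u => mu w u)

lemma mem_canonSet {w a : α} : a ∈ canonSet w ↔ ∃ u, IsCov w u ∧ a = mu w u := by
  unfold canonSet
  constructor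
  · intro h
    obtain ⟨u, hu, he⟩ := Finset.mem_image.1 h
    exact ⟨u, (Finset.mem_filter.1 hu).2, he.symm⟩
  · rintro ⟨u, hu, he⟩
    exact Finset.mem_image.2 ⟨u, Finset.mem_filter.2 ⟨Finset.mem_univ u, hu⟩, he.symm⟩

lemma canonSet_inf (hmsd : MeetSemidistrib α) (w : α) : (canonSet w).inf id = w := by
  have hge : w ≤ (canonSet w).inf id := Finset.le_inf fun a ha => by
    obtain ⟨u, hcov, he⟩ := mem_canonSet.1 ha
    show w ≤ a
    rw [he]; exact w_le_mu
  rcases eq_or_lt_of_le hge with h | h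
  · exact h.symm
  · exfalso
    obtain ⟨u, hcov, huy⟩ := exists_cov_le h
    have hmem : mu w u ∈ canonSet w := mem_canonSet.2 ⟨u, hcov, rfl⟩
    have : u ≤ mu w u := huy.trans (Finset.inf_le (f := id) hmem)
    have h2 := mu_inf hmsd hcov.1.le
    rw [inf_eq_right.2 this] at h2
    exact hcov.1.ne' h2

lemma canonSet_irred (hmsd : MeetSemidistrib α) (w : α) : IrredMeetRep (canonSet w) w := by
  refine ⟨canonSet_inf hmsd w, fun A' hA' => ?_⟩
  obtain ⟨x, hx, hxA'⟩ := Finset.exists_of_ssubset hA'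
  obtain ⟨u₀, hcov₀, hx₀⟩ := mem_canonSet.1 hx
  have hle : u₀ ≤ A'.inf id := Finset.le_inf fun b hb => by
    obtain ⟨u₁, hcov₁, hb₁⟩ := mem_canonSet.1 (hA'.subset hb)
    have hne : u₀ ≠ u₁ := fun h => hxA' (by rw [hx₀, h, ← hb₁]; exact hb)
    show u₀ ≤ b
    rw [hb₁]
    exact le_mu (cov_inf_cov hcov₀ hcov₁ hne)
  exact lt_of_lt_of_le hcov₀.1 hle

lemma exists_inf_eq_of_cov {w u : α} (hcov : IsCov w u) {B : Finset α}
    (hB : B.inf id = w) : ∃ b ∈ B, b ⊓ u = w := by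
  have hex : ∃ b ∈ B, ¬ u ≤ b := by
    by_contra h
    push_neg at h
    have : u ≤ B.inf id := Finset.le_inf h
    rw [hB] at this
    exact absurd this hcov.1.not_ge
  obtain ⟨b, hb, hub⟩ := hex
  have hwb : w ≤ b := by
    have := Finset.inf_le (f := id) hb
    rw [hB] at this; exact this
  refine ⟨b, hb, ?_⟩
  rcases eq_or_lt_of_le (le_inf hwb hcov.1.le : w ≤ b ⊓ u) with h | h
  · exact h.symm
  · exact absurd (hcov.2 _ h inf_le_right)
      fun he => hub (le_of_eq_of_le he.symm inf_le_left)

lemma canonSet_canonical (hmsd : MeetSemidistrib α) (w : α) :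
    CanonicalMeetRep (canonSet w) w := by
  refine ⟨canonSet_irred hmsd w, fun B hB a ha => ?_⟩
  obtain ⟨u, hcov, hau⟩ := mem_canonSet.1 ha
  obtain ⟨b, hb, hbu⟩ := exists_inf_eq_of_cov hcov hB.1
  exact ⟨b, hb, by rw [hau]; exact le_mu hbu⟩

lemma canonicalMeetRep_unique {A B : Finset α} {w : α}
    (hA : CanonicalMeetRep A w) (hB : CanonicalMeetRep B w) : A = B := by
  have key : ∀ {X Y : Finset α}, CanonicalMeetRep X w → CanonicalMeetRep Y w → X ⊆ Y := by
    intro X Y hX hY a ha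
    obtain ⟨b, hb, hba⟩ := hX.2 Y hY.1 a ha
    obtain ⟨a', ha', ha'b⟩ := hY.2 X hX.1 b hb
    have haa : a' ≤ a := ha'b.trans hba
    have heq : a' = a := by
      by_contra hne
      have hmem : a' ∈ X.erase a := Finset.mem_erase.2 ⟨hne, ha'⟩
      have h1 : (X.erase a).inf id ≤ a := (Finset.inf_le (f := id) hmem).trans haa
      have h2 : (X.erase a).inf id = w := by
        have h3 := hX.1.1
        rw [← Finset.insert_erase ha, Finset.inf_insert] at h3
        have h4 : (id a : α) ⊓ (X.erase a).inf id = (X.erase a).inf id :=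
          inf_eq_right.2 h1
        rw [h4] at h3
        exact h3
      have h5 := hX.1.2 (X.erase a) (Finset.erase_ssubset ha)
      rw [h2] at h5
      exact lt_irrefl w h5
    have hba' : b = a := le_antisymm hba (heq ▸ ha'b)
    exact hba' ▸ hb
  exact Finset.Subset.antisymm (key hA hB) (key hB hA)

lemma antichain_of_irred {A : Finset α} {w a b : α} (h : IrredMeetRep A w)
    (ha : a ∈ A) (hb : b ∈ A) (hab : a ≤ b) : a = b := by
  by_contra hne
  have hmem : a ∈ A.erase b := Finset.mem_erase.2 ⟨hne, ha⟩
  have h1 : (A.erase b).inf id ≤ b := (Finset.inf_le (f := id) hmem).trans hab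
  have h2 : (A.erase b).inf id = w := by
    have h3 := h.1
    rw [← Finset.insert_erase hb, Finset.inf_insert] at h3
    have h4 : (id b : α) ⊓ (A.erase b).inf id = (A.erase b).inf id := inf_eq_right.2 h1
    rw [h4] at h3
    exact h3
  have h5 := h.2 (A.erase b) (Finset.erase_ssubset hb)
  rw [h2] at h5
  exact lt_irrefl w h5

lemma inf_pair {a b : α} : ({a, b} : Finset α).inf id = a ⊓ b := by
  rw [Finset.inf_insert, Finset.inf_singleton]; rfl

/-- Subsets of canonical meet representations meet canonically. -/
lemma canonSet_subset_canonical (hmsd : MeetSemidistrib α) {w : α} {D : Finset α}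
    (hD : D ⊆ canonSet w) : MeetsCanonically D := by
  have hAirr : IrredMeetRep (canonSet w) w := canonSet_irred hmsd w
  refine ⟨⟨rfl, fun D' hD' => ?_⟩, fun B' hB' => ?_⟩
  · obtain ⟨d, hdD, hdD'⟩ := Finset.exists_of_ssubset hD'
    refine lt_of_le_of_ne (Finset.inf_mono hD'.subset) fun heq => ?_
    have hdA := hD hdD
    have hsplit : (canonSet w).erase d = (D.erase d) ∪ (canonSet w \ D) := by
      ext z
      simp only [Finset.mem_erase, Finset.mem_union, Finset.mem_sdiff]
      constructor
      · rintro ⟨hzd, hzA⟩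
        by_cases hzD : z ∈ D
        · exact Or.inl ⟨hzd, hzD⟩
        · exact Or.inr ⟨hzA, hzD⟩
      · rintro (⟨hzd, hzD⟩ | ⟨hzA, hzD⟩)
        · exact ⟨hzd, hD hzD⟩
        · exact ⟨fun h => hzD (h ▸ hdD), hzA⟩
    have hinfE : ((canonSet w).erase d).inf id = w := by
      apply le_antisymm
      · calc ((canonSet w).erase d).inf id
            = (D.erase d).inf id ⊓ (canonSet w \ D).inf id := by
              rw [hsplit, Finset.inf_union]
          _ ≤ D'.inf id ⊓ (canonSet w \ D).inf id := by
              refine inf_le_inf_right _ (Finset.inf_mono fun z hz => ?_)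
              exact Finset.mem_erase.2 ⟨fun h => hdD' (h ▸ hz), hD'.subset hz⟩
          _ = D.inf id ⊓ (canonSet w \ D).inf id := by rw [← heq]
          _ = (D ∪ (canonSet w \ D)).inf id := (Finset.inf_union).symm
          _ = (canonSet w).inf id := by rw [Finset.union_sdiff_of_subset hD]
          _ = w := canonSet_inf hmsd w
      · have h6 : (canonSet w).inf id ≤ ((canonSet w).erase d).inf id :=
          Finset.inf_mono (Finset.erase_subset d (canonSet w))
        rw [canonSet_inf hmsd w] at h6
        exact h6
    have h5 := hAirr.2 _ (Finset.erase_ssubset hdA)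
    rw [hinfE] at h5
    exact lt_irrefl w h5
  · intro d hd
    obtain ⟨u, hcov, hdu⟩ := mem_canonSet.1 (hD hd)
    have hinfB'' : (B' ∪ (canonSet w \ D)).inf id = w := by
      calc (B' ∪ (canonSet w \ D)).inf id
          = B'.inf id ⊓ (canonSet w \ D).inf id := Finset.inf_union
        _ = D.inf id ⊓ (canonSet w \ D).inf id := by rw [hB'.1]
        _ = (canonSet w).inf id := by rw [← Finset.inf_union, Finset.union_sdiff_of_subset hD]
        _ = w := canonSet_inf hmsd w
    obtain ⟨b, hb, hbu⟩ := exists_inf_eq_of_cov hcov hinfB''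
    rcases Finset.mem_union.1 hb with hbB | hbAD
    · exact ⟨b, hbB, by rw [hdu]; exact le_mu hbu⟩
    · exfalso
      have hbA := (Finset.mem_sdiff.1 hbAD).1
      have hbd : b ≤ d := by rw [hdu]; exact le_mu hbu
      have hbe := antichain_of_irred hAirr hbA (hD hd) hbd
      exact (Finset.mem_sdiff.1 hbAD).2 (hbe ▸ hd)

/-- The least element not below `m` that lies below the unique cover of `m`
(exists by join-semidistributivity). -/
noncomputable def kap (m : α) : α :=
  ((Finset.univ.filter (fun x : α => x ≤ ustar m ∧ ¬ x ≤ m)).inf id) ⊓ ustar m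

lemma kap_sup (hjsd : JoinSemidistrib α) {m : α} (hm : MeetIrred m) :
    kap m ⊔ m = ustar m := by
  have key : ∀ s : Finset α, (∀ x ∈ s, x ⊔ m = ustar m) →
      (s.inf id ⊓ ustar m) ⊔ m = ustar m := by
    intro s
    induction s using Finset.induction_on with
    | empty =>
      intro _
      simp only [Finset.inf_empty, top_inf_eq]
      exact sup_eq_left.2 le_ustar
    | @insert a s hns ih =>
      intro hall
      have ha : m ⊔ a = ustar m := by
        rw [sup_comm]; exact hall a (Finset.mem_insert_self a s)
      have hs : m ⊔ (s.inf id ⊓ ustar m) = ustar m := by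
        rw [sup_comm]; exact ih fun x hx => hall x (Finset.mem_insert_of_mem hx)
      have h2 := hjsd m a (s.inf id ⊓ ustar m) (ha.trans hs.symm)
      calc ((insert a s).inf id ⊓ ustar m) ⊔ m
          = m ⊔ (a ⊓ (s.inf id ⊓ ustar m)) := by
            rw [Finset.inf_insert, show (id a : α) = a from rfl, inf_assoc, sup_comm]
        _ = m ⊔ a := h2
        _ = ustar m := ha
  apply key
  intro x hx
  obtain ⟨-, hx1, hx2⟩ := Finset.mem_filter.1 hx
  exact le_antisymm (sup_le hx1 le_ustar) (ustar_le_sup hx2)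

lemma kap_le_ustar {m : α} : kap m ≤ ustar m := inf_le_right

lemma kap_not_le (hjsd : JoinSemidistrib α) {m : α} (hm : MeetIrred m) : ¬ kap m ≤ m := by
  intro h
  have h1 : kap m ⊔ m = m := sup_eq_right.2 h
  have h2 := kap_sup hjsd hm
  rw [h1] at h2
  exact (lt_ustar hm).ne h2

lemma kap_least {m x : α} (hx1 : x ≤ ustar m) (hx2 : ¬ x ≤ m) : kap m ≤ x :=
  inf_le_left.trans
    (Finset.inf_le (f := id) (Finset.mem_filter.2 ⟨Finset.mem_univ x, hx1, hx2⟩))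

lemma kap_lt_imp_le (hjsd : JoinSemidistrib α) {m y : α} (hm : MeetIrred m)
    (h : y < kap m) : y ≤ m := by
  by_contra hy
  exact absurd (kap_least (h.le.trans kap_le_ustar) hy) h.not_ge

lemma kap_le_of_pair (hmsd : MeetSemidistrib α) {m m' : α}
    (hne : m ≠ m') (hp : MeetsCanonically ({m, m'} : Finset α)) : kap m ≤ m' := by
  have hq : ({m, m'} : Finset α).inf id = m ⊓ m' := inf_pair
  have hC : ({m, m'} : Finset α) = canonSet (m ⊓ m') := by
    have h1 := canonicalMeetRep_unique hp (canonSet_canonical hmsd _)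
    rw [hq] at h1
    exact h1
  have hmmem : m ∈ canonSet (m ⊓ m') := by
    rw [← hC]; exact Finset.mem_insert_self m _
  obtain ⟨u, hcovu, hmu⟩ := mem_canonSet.1 hmmem
  have hm'mem : m' ∈ canonSet (m ⊓ m') := by
    rw [← hC]; exact Finset.mem_insert.2 (Or.inr (Finset.mem_singleton_self m'))
  obtain ⟨u', hcovu', hmu'⟩ := mem_canonSet.1 hm'mem
  have hune : u ≠ u' := fun h => hne (by rw [hmu, h, ← hmu'])
  have huu' : u ⊓ u' = m ⊓ m' := cov_inf_cov hcovu hcovu' hune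
  have hule : u ≤ m' := by
    rw [hmu']; exact le_mu huu'
  have hust : u ≤ ustar m := by
    have := u_le_ustar_mu hmsd hcovu
    rw [← hmu] at this
    exact this
  have hunm : ¬ u ≤ m := by
    intro h
    have h1 : m ⊓ u = u := inf_eq_right.2 h
    have h2 := mu_inf hmsd hcovu.1.le
    rw [← hmu, h1] at h2
    exact hcovu.1.ne' h2
  exact (kap_least hust hunm).trans hule

/-- Direction 1: a finite semidistributive lattice has flag canonical meet complex. -/
theorem flag_of_sd (hmsd : MeetSemidistrib α) (hjsd : JoinSemidistrib α) :
    FlagCanonicalMeetComplex α := by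
  intro F hirr hpair
  have key : ∀ m ∈ F, ∃ u, IsCov (F.inf id) u ∧ (∀ x, x ⊓ u = F.inf id → x ≤ m) ∧
      F.inf id < (F.erase m).inf id := by
    intro m hm
    have hmi := hirr m hm
    have hwm : F.inf id = m ⊓ (F.erase m).inf id := by
      conv_lhs => rw [← Finset.insert_erase hm]
      rw [Finset.inf_insert]
      rfl
    have hwlem : F.inf id ≤ m := by rw [hwm]; exact inf_le_left
    have hwlexm : F.inf id ≤ (F.erase m).inf id := by rw [hwm]; exact inf_le_right
    have hκ : kap m ≤ (F.erase m).inf id := Finset.le_inf fun m' hm' => by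
      have hm'F : m' ∈ F := Finset.mem_of_mem_erase hm'
      have hne : m ≠ m' := fun h => (Finset.mem_erase.1 hm').1 h.symm
      exact kap_le_of_pair hmsd hne (hpair m hm m' hm'F hne)
    have hκm : ¬ kap m ≤ m := kap_not_le hjsd hmi
    have huxm : kap m ⊔ F.inf id ≤ (F.erase m).inf id := sup_le hκ hwlexm
    have hinfmu : m ⊓ (kap m ⊔ F.inf id) = F.inf id := by
      refine le_antisymm ?_ (le_inf hwlem le_sup_right)
      calc m ⊓ (kap m ⊔ F.inf id) ≤ m ⊓ (F.erase m).inf id := inf_le_inf_left m huxm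
        _ = F.inf id := hwm.symm
    have hmax : ∀ x, x ⊓ (kap m ⊔ F.inf id) = F.inf id → x ≤ m := by
      intro x hx
      by_contra hxm
      have h1 : (kap m ⊔ F.inf id) ⊓ x = (kap m ⊔ F.inf id) ⊓ m := by
        rw [inf_comm _ x, hx, inf_comm _ m, hinfmu]
      have h2 := hmsd (kap m ⊔ F.inf id) x m h1
      have h3 : kap m ≤ (kap m ⊔ F.inf id) ⊓ (x ⊔ m) :=
        le_inf le_sup_left ((kap_le_ustar).trans (ustar_le_sup hxm))
      rw [h2, inf_comm _ x, hx] at h3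
      exact hκm (h3.trans hwlem)
    have hwltxm : F.inf id < (F.erase m).inf id := by
      refine lt_of_le_of_ne hwlexm fun h => ?_
      exact hκm ((hκ.trans h.ge).trans hwlem)
    refine ⟨kap m ⊔ F.inf id, ⟨?_, ?_⟩, hmax, hwltxm⟩
    · exact lt_of_le_of_ne le_sup_right
        (fun h => hκm ((le_sup_left.trans h.ge).trans hwlem))
    · intro t hwt htu
      by_cases hκt : kap m ≤ t
      · exact le_antisymm htu (sup_le hκt hwt.le)
      · exfalso
        have h1 : kap m ⊓ t ≤ m := kap_lt_imp_le hjsd hmi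
          (lt_of_le_of_ne inf_le_left fun h => hκt (inf_eq_left.1 h))
        have h3 : kap m ⊓ t ≤ F.inf id := by
          rw [hwm]
          exact le_inf h1 (inf_le_right.trans (htu.trans huxm))
        have h4 : kap m ⊓ m ≤ F.inf id := by
          rw [hwm]
          exact le_inf inf_le_right (inf_le_left.trans hκ)
        have e1 : kap m ⊓ t = kap m ⊓ F.inf id :=
          le_antisymm (le_inf inf_le_left h3) (inf_le_inf_left _ hwt.le)
        have e2 : kap m ⊓ m = kap m ⊓ F.inf id :=
          le_antisymm (le_inf inf_le_left h4) (inf_le_inf_left _ hwlem)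
        have h6 := hmsd (kap m) t m (e1.trans e2.symm)
        have htnm : ¬ t ≤ m := by
          intro h
          refine hwt.not_ge ?_
          rw [hwm]
          exact le_inf h (htu.trans huxm)
        have h7 : kap m ≤ t ⊔ m := (kap_le_ustar).trans (ustar_le_sup htnm)
        have h8 : kap m ≤ kap m ⊓ t := by
          rw [← h6]; exact le_inf le_rfl h7
        exact hκm ((h8.trans h3).trans hwlem)
  refine ⟨⟨rfl, ?_⟩, ?_⟩
  · intro F' hF'
    obtain ⟨m, hmF, hmF'⟩ := Finset.exists_of_ssubset hF'
    obtain ⟨u, hcov, hmax, hxm⟩ := key m hmF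
    refine lt_of_lt_of_le hxm (Finset.inf_mono fun a ha => ?_)
    exact Finset.mem_erase.2 ⟨fun h => hmF' (h ▸ ha), hF'.subset ha⟩
  · intro B hB m hm
    obtain ⟨u, hcov, hmax, -⟩ := key m hm
    obtain ⟨b, hb, hbu⟩ := exists_inf_eq_of_cov hcov hB.1
    exact ⟨b, hb, hmax b hbu⟩

/-- The key pair lemma for the converse: `{m, a}` meets canonically. -/
lemma pair_canonical (hmsd : MeetSemidistrib α) {m κ v u₀ a : α}
    (hm : MeetIrred m) (hκu : κ ≤ ustar m) (hκm : ¬ κ ≤ m)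
    (hκmin : ∀ y, y < κ → y ≤ m)
    (hcov : IsCov v u₀) (hvm : v ≤ m) (ha : a = mu v u₀) (hκa : κ ≤ a)
    (hma : ¬ m ≤ a) :
    MeetsCanonically ({m, a} : Finset α) := by
  have hainf : a ⊓ u₀ = v := by rw [ha]; exact mu_inf hmsd hcov.1.le
  have ham : ¬ a ≤ m := fun h => hκm (hκa.trans h)
  have haMI : MeetIrred a := by rw [ha]; exact mu_meetIrred hmsd hcov
  have hu₀m : u₀ ≤ m := by
    rcases eq_or_lt_of_le (le_inf hvm hcov.1.le : v ≤ m ⊓ u₀) with h | h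
    · exact absurd (by rw [ha]; exact le_mu h.symm) hma
    · have h2 := hcov.2 _ h inf_le_right
      rw [← h2]; exact inf_le_left
  have hu₀a : ¬ u₀ ≤ a := by
    intro h
    have h1 : a ⊓ u₀ = u₀ := inf_eq_right.2 h
    rw [h1] at hainf
    exact hcov.1.ne' hainf
  have hu₀ua : u₀ ≤ ustar a := by rw [ha]; exact u_le_ustar_mu hmsd hcov
  obtain ⟨lam, hlam', hlmin'⟩ :=
    (Finset.univ.filter (fun z : α => z ≤ ustar a ∧ ¬ z ≤ a ∧ z ≤ m)).exists_minimal
      ⟨u₀, Finset.mem_filter.2 ⟨Finset.mem_univ u₀, hu₀ua, hu₀a, hu₀m⟩⟩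
  obtain ⟨-, hlu, hla, hlm⟩ := Finset.mem_filter.1 hlam'
  have hlmin : ∀ y, y < lam → y ≤ a := by
    intro y hy
    by_contra hya
    exact lt_irrefl _ (lt_of_lt_of_le hy (hlmin' (y := y)
      (Finset.mem_filter.2 ⟨Finset.mem_univ y, hy.le.trans hlu, hya, hy.le.trans hlm⟩) hy.le))
  have hpm : m ⊓ a ≤ m := inf_le_left
  have hpa : m ⊓ a ≤ a := inf_le_right
  have hpnem : m ⊓ a ≠ m := fun h => hma (le_of_eq_of_le h.symm inf_le_right)
  have hpnea : m ⊓ a ≠ a := fun h => ham (le_of_eq_of_le h.symm inf_le_left)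
  have hu₁a : κ ⊔ (m ⊓ a) ≤ a := sup_le hκa hpa
  have hu₂m : lam ⊔ (m ⊓ a) ≤ m := sup_le hlm hpm
  have h1a : m ⊓ (κ ⊔ (m ⊓ a)) = m ⊓ a :=
    le_antisymm (le_inf inf_le_left (inf_le_right.trans hu₁a)) (le_inf hpm le_sup_right)
  have h2a : a ⊓ (lam ⊔ (m ⊓ a)) = m ⊓ a :=
    le_antisymm (le_inf (inf_le_right.trans hu₂m) inf_le_left) (le_inf hpa le_sup_right)
  have h1max : ∀ x, x ⊓ (κ ⊔ (m ⊓ a)) = m ⊓ a → x ≤ m := by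
    intro x hx
    by_contra hxm
    have h1 : (κ ⊔ (m ⊓ a)) ⊓ x = (κ ⊔ (m ⊓ a)) ⊓ m := by
      rw [inf_comm (κ ⊔ (m ⊓ a)) x, hx, inf_comm (κ ⊔ (m ⊓ a)) m, h1a]
    have h2 := hmsd (κ ⊔ (m ⊓ a)) x m h1
    have h3 : κ ≤ (κ ⊔ (m ⊓ a)) ⊓ (x ⊔ m) :=
      le_inf le_sup_left (hκu.trans (ustar_le_sup hxm))
    rw [h2, inf_comm _ x, hx] at h3
    exact hκm (h3.trans hpm)
  have h2max : ∀ x, x ⊓ (lam ⊔ (m ⊓ a)) = m ⊓ a → x ≤ a := by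
    intro x hx
    by_contra hxa
    have h1 : (lam ⊔ (m ⊓ a)) ⊓ x = (lam ⊔ (m ⊓ a)) ⊓ a := by
      rw [inf_comm (lam ⊔ (m ⊓ a)) x, hx, inf_comm (lam ⊔ (m ⊓ a)) a, h2a]
    have h2 := hmsd (lam ⊔ (m ⊓ a)) x a h1
    have h3 : lam ≤ (lam ⊔ (m ⊓ a)) ⊓ (x ⊔ a) :=
      le_inf le_sup_left (hlu.trans (ustar_le_sup hxa))
    rw [h2, inf_comm _ x, hx] at h3
    exact hla (h3.trans hpa)
  have h1cov : IsCov (m ⊓ a) (κ ⊔ (m ⊓ a)) := by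
    constructor
    · exact lt_of_le_of_ne le_sup_right
        (fun h => hκm ((le_sup_left.trans h.ge).trans hpm))
    · intro t hpt htu
      by_cases hκt : κ ≤ t
      · exact le_antisymm htu (sup_le hκt hpt.le)
      · exfalso
        have hκtm : κ ⊓ t ≤ m := hκmin _
          (lt_of_le_of_ne inf_le_left fun h => hκt (inf_eq_left.1 h))
        have hκtp : κ ⊓ t ≤ m ⊓ a :=
          le_inf hκtm (inf_le_right.trans (htu.trans hu₁a))
        have hκmp : κ ⊓ m ≤ m ⊓ a := le_inf inf_le_right (inf_le_left.trans hκa)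
        have e1 : κ ⊓ t = κ ⊓ (m ⊓ a) :=
          le_antisymm (le_inf inf_le_left hκtp) (inf_le_inf_left _ hpt.le)
        have e2 : κ ⊓ m = κ ⊓ (m ⊓ a) :=
          le_antisymm (le_inf inf_le_left hκmp) (inf_le_inf_left _ hpm)
        have h6 := hmsd κ t m (e1.trans e2.symm)
        have htnm : ¬ t ≤ m := fun h =>
          hpt.not_ge (le_inf h (htu.trans hu₁a))
        have h7 : κ ≤ t ⊔ m := hκu.trans (ustar_le_sup htnm)
        have h8 : κ ≤ κ ⊓ t := by rw [← h6]; exact le_inf le_rfl h7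
        exact hκm ((h8.trans hκtp).trans hpm)
  have h2cov : IsCov (m ⊓ a) (lam ⊔ (m ⊓ a)) := by
    constructor
    · exact lt_of_le_of_ne le_sup_right
        (fun h => hla ((le_sup_left.trans h.ge).trans hpa))
    · intro t hpt htu
      by_cases hlt : lam ≤ t
      · exact le_antisymm htu (sup_le hlt hpt.le)
      · exfalso
        have hlta : lam ⊓ t ≤ a := hlmin _
          (lt_of_le_of_ne inf_le_left fun h => hlt (inf_eq_left.1 h))
        have hltp : lam ⊓ t ≤ m ⊓ a :=
          le_inf (inf_le_right.trans (htu.trans hu₂m)) hlta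
        have hlap : lam ⊓ a ≤ m ⊓ a := le_inf (inf_le_left.trans hlm) inf_le_right
        have e1 : lam ⊓ t = lam ⊓ (m ⊓ a) :=
          le_antisymm (le_inf inf_le_left hltp) (inf_le_inf_left _ hpt.le)
        have e2 : lam ⊓ a = lam ⊓ (m ⊓ a) :=
          le_antisymm (le_inf inf_le_left hlap) (inf_le_inf_left _ hpa)
        have h6 := hmsd lam t a (e1.trans e2.symm)
        have htna : ¬ t ≤ a := fun h =>
          hpt.not_ge (le_inf (htu.trans hu₂m) h)
        have h7 : lam ≤ t ⊔ a := hlu.trans (ustar_le_sup htna)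
        have h8 : lam ≤ lam ⊓ t := by rw [← h6]; exact le_inf le_rfl h7
        exact hla ((h8.trans hltp).trans hpa)
  have hpinf : ({m, a} : Finset α).inf id = m ⊓ a := inf_pair
  show CanonicalMeetRep _ _
  rw [hpinf]
  refine ⟨⟨hpinf, fun A' hA' => ?_⟩, fun B' hB' => ?_⟩
  · have hge : m ⊓ a ≤ A'.inf id := by
      rw [← hpinf]
      exact Finset.inf_mono hA'.subset
    refine lt_of_le_of_ne hge fun heq => ?_
    have hmem : m ∉ A' ∨ a ∉ A' := by
      by_contra h
      push_neg at h
      exact hA'.ne (Finset.Subset.antisymm hA'.subset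
        (Finset.insert_subset h.1 (Finset.singleton_subset_iff.2 h.2)))
    have hcases : A' = ∅ ∨ A' = {a} ∨ A' = {m} := by
      rcases hmem with h | h
      · have hsub : A' ⊆ {a} := by
          intro z hz
          rcases Finset.mem_insert.1 (hA'.subset hz) with h1 | h1
          · exact absurd (h1 ▸ hz) h
          · exact h1
        rcases Finset.subset_singleton_iff.1 hsub with h1 | h1
        · exact Or.inl h1
        · exact Or.inr (Or.inl h1)
      · have hsub : A' ⊆ {m} := by
          intro z hz
          rcases Finset.mem_insert.1 (hA'.subset hz) with h1 | h1
          · exact Finset.mem_singleton.2 h1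
          · exact absurd ((Finset.mem_singleton.1 h1) ▸ hz) h
        rcases Finset.subset_singleton_iff.1 hsub with h1 | h1
        · exact Or.inl h1
        · exact Or.inr (Or.inr h1)
    rcases hcases with h | h | h
    · rw [h, Finset.inf_empty] at heq
      exact hm.1 (top_le_iff.1 (le_of_eq_of_le heq.symm hpm))
    · rw [h, Finset.inf_singleton] at heq
      exact hpnea heq
    · rw [h, Finset.inf_singleton] at heq
      exact hpnem heq
  · intro j hj
    rcases Finset.mem_insert.1 hj with h | h
    · obtain ⟨b, hb, hbu⟩ := exists_inf_eq_of_cov h1cov hB'.1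
      exact ⟨b, hb, (h1max b hbu).trans_eq h.symm⟩
    · obtain ⟨b, hb, hbu⟩ := exists_inf_eq_of_cov h2cov hB'.1
      exact ⟨b, hb, (h2max b hbu).trans_eq (Finset.mem_singleton.1 h).symm⟩

/-- If the canonical meet complex is flag, every meet-irreducible `m` admits a least
element below `ustar m` not below `m`. -/
lemma exists_kappa_of_flag (hmsd : MeetSemidistrib α)
    (hflag : FlagCanonicalMeetComplex α) {m : α} (hm : MeetIrred m) :
    ∃ κ, (κ ≤ ustar m ∧ ¬ κ ≤ m) ∧ ∀ x, x ≤ ustar m → ¬ x ≤ m → κ ≤ x := by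
  have hKne : (Finset.univ.filter (fun x : α => x ≤ ustar m ∧ ¬ x ≤ m)).Nonempty :=
    ⟨ustar m, Finset.mem_filter.2 ⟨Finset.mem_univ _, le_rfl,
      fun h => (lt_ustar hm).not_ge h⟩⟩
  obtain ⟨κ₁, hκ₁K, hκ₁min⟩ := Finset.exists_minimal hKne
  by_cases hleast : ∀ x ∈ Finset.univ.filter (fun x : α => x ≤ ustar m ∧ ¬ x ≤ m), κ₁ ≤ x
  · exact ⟨κ₁, (Finset.mem_filter.1 hκ₁K).2, fun x hx1 hx2 =>
      hleast x (Finset.mem_filter.2 ⟨Finset.mem_univ x, hx1, hx2⟩)⟩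
  exfalso
  push_neg at hleast
  obtain ⟨x, hxK, hxnle⟩ := hleast
  obtain ⟨κ₂, hκ₂', hκ₂min'⟩ := Finset.exists_minimal (s :=
    (Finset.univ.filter (fun x : α => x ≤ ustar m ∧ ¬ x ≤ m)).filter (fun z => z ≤ x))
    ⟨x, Finset.mem_filter.2 ⟨hxK, le_rfl⟩⟩
  have hκ₂K := (Finset.mem_filter.1 hκ₂').1
  have hκ₂x : κ₂ ≤ x := (Finset.mem_filter.1 hκ₂').2
  have hκ₂min : ∀ y ∈ Finset.univ.filter (fun x : α => x ≤ ustar m ∧ ¬ x ≤ m),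
      ¬ y < κ₂ := fun y hy hlt =>
    lt_irrefl _ (lt_of_lt_of_le hlt (hκ₂min' (y := y) (Finset.mem_filter.2 ⟨hy, hlt.le.trans hκ₂x⟩) hlt.le))
  have hne12 : κ₁ ≠ κ₂ := fun h => hxnle (h ▸ hκ₂x)
  have h12 : ¬ κ₁ ≤ κ₂ := fun h => hκ₂min κ₁ hκ₁K (lt_of_le_of_ne h hne12)
  obtain ⟨hκ₁u, hκ₁m⟩ := (Finset.mem_filter.1 hκ₁K).2
  obtain ⟨hκ₂u, hκ₂m⟩ := (Finset.mem_filter.1 hκ₂K).2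
  have hmin1 : ∀ y, y < κ₁ → y ≤ m := by
    intro y hy
    by_contra hym
    exact lt_irrefl _ (lt_of_lt_of_le hy (hκ₁min (y := y) (Finset.mem_filter.2 ⟨Finset.mem_univ y, hy.le.trans hκ₁u, hym⟩) hy.le))
  have hmin2 : ∀ y, y < κ₂ → y ≤ m := by
    intro y hy
    by_contra hym
    exact hκ₂min y (Finset.mem_filter.2 ⟨Finset.mem_univ y, hy.le.trans hκ₂u, hym⟩) hy
  have hvm : κ₁ ⊓ κ₂ ≤ m :=
    hmin1 _ (lt_of_le_of_ne inf_le_left fun h => h12 (inf_eq_left.1 h))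
  have hdich : ∀ u, IsCov (κ₁ ⊓ κ₂) u → κ₁ ⊓ u = κ₁ ⊓ κ₂ ∨ κ₂ ⊓ u = κ₁ ⊓ κ₂ := by
    intro u hu
    by_cases h1 : κ₁ ⊓ u = κ₁ ⊓ κ₂
    · exact Or.inl h1
    · right
      have hvk1u : κ₁ ⊓ κ₂ ≤ κ₁ ⊓ u := le_inf inf_le_left hu.1.le
      have he : κ₁ ⊓ u = u := hu.2 _ (lt_of_le_of_ne hvk1u (Ne.symm h1)) inf_le_right
      have huk1 : u ≤ κ₁ := by rw [← he]; exact inf_le_left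
      have hne : κ₂ ⊓ u ≠ u := fun h =>
        hu.1.not_ge (le_inf huk1 (inf_eq_right.1 h))
      rcases eq_or_lt_of_le (le_inf inf_le_right hu.1.le : κ₁ ⊓ κ₂ ≤ κ₂ ⊓ u) with h | h
      · exact h.symm
      · exact absurd (hu.2 _ h inf_le_right) hne
  have hAk : ∀ a ∈ canonSet (κ₁ ⊓ κ₂), κ₁ ≤ a ∨ κ₂ ≤ a := by
    intro a ha
    obtain ⟨u, hcov, hau⟩ := mem_canonSet.1 ha
    rcases hdich u hcov with h | h
    · exact Or.inl (by rw [hau]; exact le_mu h)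
    · exact Or.inr (by rw [hau]; exact le_mu h)
  have hAnm : ∀ a ∈ canonSet (κ₁ ⊓ κ₂), ¬ a ≤ m := by
    intro a ha ham
    rcases hAk a ha with h | h
    exacts [hκ₁m (h.trans ham), hκ₂m (h.trans ham)]
  set B := (canonSet (κ₁ ⊓ κ₂)).filter (fun a => ¬ m ≤ a) with hBdef
  have hBsubA : B ⊆ canonSet (κ₁ ⊓ κ₂) := Finset.filter_subset _ _
  have hmB : m ∉ B := fun h => hAnm m (hBsubA h) le_rfl
  have hFinf : (insert m B).inf id = κ₁ ⊓ κ₂ := by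
    have hsplit : (canonSet (κ₁ ⊓ κ₂)).filter (fun a => m ≤ a) ∪ B = canonSet (κ₁ ⊓ κ₂) := by
      rw [hBdef]
      exact Finset.filter_union_filter_not_eq _ _
    have h1 : ((canonSet (κ₁ ⊓ κ₂)).filter (fun a => m ≤ a)).inf id ⊓ B.inf id
        = κ₁ ⊓ κ₂ := by
      rw [← Finset.inf_union, hsplit]
      exact canonSet_inf hmsd _
    apply le_antisymm
    · rw [Finset.inf_insert]
      calc (id m : α) ⊓ B.inf id
          ≤ ((canonSet (κ₁ ⊓ κ₂)).filter (fun a => m ≤ a)).inf id ⊓ B.inf id :=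
            inf_le_inf_right _ (Finset.le_inf fun c hc => (Finset.mem_filter.1 hc).2)
        _ = κ₁ ⊓ κ₂ := h1
    · rw [Finset.inf_insert]
      refine le_inf hvm (Finset.le_inf fun b hb => ?_)
      have := Finset.inf_le (f := id) (hBsubA hb)
      rw [canonSet_inf hmsd _] at this
      exact this
  have hFirr : ∀ z ∈ insert m B, MeetIrred z := by
    intro z hz
    rcases Finset.mem_insert.1 hz with h | h
    · exact h ▸ hm
    · obtain ⟨u, hcov, hzu⟩ := mem_canonSet.1 (hBsubA h)
      rw [hzu]
      exact mu_meetIrred hmsd hcov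
  have hpairlem : ∀ y ∈ B, MeetsCanonically ({m, y} : Finset α) := by
    intro y hy
    obtain ⟨u₀, hcov, hyu⟩ := mem_canonSet.1 (hBsubA hy)
    have hmy : ¬ m ≤ y := (Finset.mem_filter.1 hy).2
    rcases hAk y (hBsubA hy) with h | h
    · exact pair_canonical hmsd hm hκ₁u hκ₁m hmin1 hcov hvm hyu h hmy
    · exact pair_canonical hmsd hm hκ₂u hκ₂m hmin2 hcov hvm hyu h hmy
  have hFpair : ∀ z ∈ insert m B, ∀ y ∈ insert m B, z ≠ y →
      MeetsCanonically ({z, y} : Finset α) := by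
    intro z hz y hy hzy
    rcases Finset.mem_insert.1 hz with hzm | hzB
    · rcases Finset.mem_insert.1 hy with hym | hyB
      · exact absurd (hzm.trans hym.symm) hzy
      · rw [hzm]
        exact hpairlem y hyB
    · rcases Finset.mem_insert.1 hy with hym | hyB
      · rw [Finset.pair_comm, hym]
        exact hpairlem z hzB
      · refine canonSet_subset_canonical hmsd (w := κ₁ ⊓ κ₂) ?_
        exact Finset.insert_subset (hBsubA hzB)
          (Finset.singleton_subset_iff.2 (hBsubA hyB))
  have hcanF := hflag (insert m B) hFirr hFpair
  have hFA : insert m B = canonSet (κ₁ ⊓ κ₂) := by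
    have h2 := canonicalMeetRep_unique hcanF (canonSet_canonical hmsd _)
    rw [hFinf] at h2
    exact h2
  exact hAnm m (hFA ▸ Finset.mem_insert_self m B) le_rfl

end Stmt16Aux

/-- Corollary (meet version of Theorem 1): a finite meet-semidistributive lattice has flag
canonical meet complex iff it is semidistributive. -/
theorem stmt_16 {α : Type*} [Lattice α] [BoundedOrder α] [Fintype α] [DecidableEq α]
    (hmsd : MeetSemidistrib α) :
    FlagCanonicalMeetComplex α ↔ (JoinSemidistrib α ∧ MeetSemidistrib α) := by
  classical
  constructor
  · intro hflag
    refine ⟨?_, hmsd⟩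
    intro x y z hxyz
    by_contra hne
    have htlts : x ⊔ (y ⊓ z) < x ⊔ y :=
      lt_of_le_of_ne (sup_le_sup_left inf_le_left x) hne
    obtain ⟨m, hmS, hmmax⟩ :=
      (Finset.univ.filter (fun m : α => x ⊔ (y ⊓ z) ≤ m ∧ ¬ x ⊔ y ≤ m)).exists_maximal
        ⟨x ⊔ (y ⊓ z), Finset.mem_filter.2 ⟨Finset.mem_univ _, le_rfl, htlts.not_ge⟩⟩
    obtain ⟨-, htm, hsm⟩ := Finset.mem_filter.1 hmS
    have hsq : ∀ q, m < q → x ⊔ y ≤ q := by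
      intro q hq
      by_contra hsq
      exact lt_irrefl _ (lt_of_lt_of_le hq (hmmax (y := q) (Finset.mem_filter.2 ⟨Finset.mem_univ q, htm.trans hq.le, hsq⟩) hq.le))
    have hmMI : MeetIrred m := by
      constructor
      · intro h
        exact hsm (h ▸ le_top)
      · intro a b hab
        by_contra hcon
        push_neg at hcon
        have hma : m < a := lt_of_le_of_ne (le_of_eq_of_le hab inf_le_left) hcon.1
        have hmb : m < b := lt_of_le_of_ne (le_of_eq_of_le hab inf_le_right) hcon.2
        refine hsm ?_
        rw [hab]
        exact le_inf (hsq a hma) (hsq b hmb)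
    have hsu : x ⊔ y ≤ ustar m :=
      Finset.le_inf fun q hq => hsq q (Finset.mem_filter.1 hq).2
    have hxle : x ≤ m := le_sup_left.trans htm
    have hym : ¬ y ≤ m := fun h => hsm (sup_le hxle h)
    have hzm : ¬ z ≤ m := by
      intro h
      have h2 : x ⊔ z ≤ m := sup_le hxle h
      rw [← hxyz] at h2
      exact hsm h2
    obtain ⟨κ, ⟨hκu, hκm⟩, hκleast⟩ := exists_kappa_of_flag hmsd hflag hmMI
    have hκy : κ ≤ y := hκleast y (le_sup_right.trans hsu) hym
    have hκz : κ ≤ z := by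
      refine hκleast z ?_ hzm
      have : z ≤ x ⊔ z := le_sup_right
      rw [← hxyz] at this
      exact this.trans hsu
    exact hκm ((le_inf hκy hκz).trans (le_sup_right.trans htm))
  · rintro ⟨hjsd, -⟩
    exact flag_of_sd hmsd hjsd
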